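/- Let d ∈ {2,3}, let ρ > 0, h > 0, a > 0, ε > 0 satisfy ε²a² ≤ h (i.e., the relativistic sound speed c_s := a/√h satisfies c_s ≤ ε⁻¹), and let v ∈ ℝ^d with ε²|v|² < 1; set Γ := (1 − ε²|v|²)^{−1/2}. Then for every u ∈ ℝ^d: ρhΓ|u|² − (ε²ρhΓ + ε⁴ρa²Γ⁻¹)(v·u)² ≥ ρhΓ⁻³|u|². -/

import Mathlib

/-- The lower bound `𝒯₅ ≥ ρhΓ⁻³|u|²` from the proof of positive definiteness of the
relativistic MHD symmetrizer, under the subluminal sound speed condition `ε²a² ≤ h`.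
Here `Γ = (1 − ε²|v|²)^{−1/2}`. -/
theorem stmt10 (d : ℕ) (hd : d = 2 ∨ d = 3) (ρ h a ε : ℝ)
    (hρ : 0 < ρ) (hh : 0 < h) (ha : 0 < a) (hε : 0 < ε) (hsub : ε ^ 2 * a ^ 2 ≤ h)
    (v : Fin d → ℝ) (hv : ε ^ 2 * ∑ i, v i ^ 2 < 1)
    (Γ : ℝ) (hΓ : Γ = (Real.sqrt (1 - ε ^ 2 * ∑ i, v i ^ 2))⁻¹)
    (u : Fin d → ℝ) :
    ρ * h * Γ⁻¹ ^ 3 * ∑ i, u i ^ 2 ≤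
      ρ * h * Γ * (∑ i, u i ^ 2)
        - (ε ^ 2 * ρ * h * Γ + ε ^ 4 * ρ * a ^ 2 * Γ⁻¹) * (∑ i, v i * u i) ^ 2 := by
  set s : ℝ := ∑ i, v i ^ 2 with hs
  set U : ℝ := ∑ i, u i ^ 2 with hU
  set P : ℝ := (∑ i, v i * u i) ^ 2 with hP
  have hs0 : 0 ≤ s := Finset.sum_nonneg fun i _ => sq_nonneg _
  have hU0 : 0 ≤ U := Finset.sum_nonneg fun i _ => sq_nonneg _
  have hP0 : 0 ≤ P := sq_nonneg _
  have hcs : P ≤ s * U := Finset.sum_mul_sq_le_sq_mul_sq _ _ _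
  have hS : 0 < 1 - ε ^ 2 * s := by linarith
  set t : ℝ := Real.sqrt (1 - ε ^ 2 * s) with ht
  have ht0 : 0 < t := Real.sqrt_pos.2 hS
  have ht2 : t ^ 2 = 1 - ε ^ 2 * s := Real.sq_sqrt hS.le
  rw [hΓ, inv_inv]
  have key : 0 ≤ ρ * h * U - (ε ^ 2 * ρ * h + ε ^ 4 * ρ * a ^ 2 * (1 - ε ^ 2 * s)) * P
      - ρ * h * (1 - ε ^ 2 * s) ^ 2 * U := by
    have hA : 0 ≤ (ε ^ 2 * ρ * h + ε ^ 4 * ρ * a ^ 2 * (1 - ε ^ 2 * s)) * (s * U - P) :=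
      mul_nonneg (by positivity) (by linarith)
    have hB : 0 ≤ ε ^ 2 * ρ * (s * U) * ((1 - ε ^ 2 * s) * (h - ε ^ 2 * a ^ 2)) :=
      mul_nonneg (by positivity) (mul_nonneg hS.le (by linarith))
    nlinarith [hA, hB]
  have hinv : t⁻¹ = t / (1 - ε ^ 2 * s) := by
    rw [eq_div_iff hS.ne', ← ht2]; field_simp
  rw [hinv, ← sub_nonneg]
  have factor : ρ * h * (t / (1 - ε ^ 2 * s)) * U
      - (ε ^ 2 * ρ * h * (t / (1 - ε ^ 2 * s)) + ε ^ 4 * ρ * a ^ 2 * t) * P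
      - ρ * h * t ^ 3 * U
      = t / (1 - ε ^ 2 * s) * (ρ * h * U
        - (ε ^ 2 * ρ * h + ε ^ 4 * ρ * a ^ 2 * (1 - ε ^ 2 * s)) * P
        - ρ * h * (1 - ε ^ 2 * s) ^ 2 * U) := by
    have ht3 : t ^ 3 = t * (1 - ε ^ 2 * s) := by rw [← ht2]; ring
    rw [ht3]
    field_simp
  rw [factor]
  exact mul_nonneg (div_nonneg ht0.le hS.le) key
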